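/- Let d ≥ 2 and let T be a Toeplitz operator on ℓ²(ℕᵈ, ℂ) (S_i* T S_i = T for all i) with symbol coefficients φ(k), k ∈ ℤᵈ, and let C be a conjugation on ℓ²(ℕᵈ, ℂ) with canonical factorization C = U ∘ J (U := C ∘ J unitary, J the canonical conjugation fixing each e_k). Then the following are equivalent: (1) T is C-symmetric (C T* C = T); (2) ⟨T e_l, e_k⟩ = ⟨T (C e_k), (C e_l)⟩ for all k, l ∈ ℕᵈ; (3) φ(k − l) = ⟨U* T U e_k, e_l⟩ for all k, l ∈ ℕᵈ. -/

import Mathlib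

noncomputable section
open scoped ComplexConjugate
open ContinuousLinearMap

/-- A conjugation on a complex Hilbert space: an antilinear, involutive, isometric map. -/
def IsConjugation {E : Type*} [NormedAddCommGroup E] [InnerProductSpace ℂ E] (C : E → E) : Prop :=
  (∀ (a : ℂ) (f g : E), C (a • f + g) = conj a • C f + C g) ∧
  (∀ f, C (C f) = f) ∧
  (∀ f, ‖C f‖ = ‖f‖)

/-- The inner product in the paper's convention: linear in the first argument and
conjugate-linear in the second (Mathlib's `inner` with the arguments swapped). -/
def ip {E : Type*} [NormedAddCommGroup E] [InnerProductSpace ℂ E] (x y : E) : ℂ :=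
  inner ℂ y x

/-- `ℓ²(ℕᵈ, ℂ)`, identified with the Hardy space `H²(𝔻ᵈ)`. -/
abbrev Ell2d (d : ℕ) : Type := lp (fun _ : (Fin d → ℕ) => ℂ) 2

/-- The standard orthonormal basis of `ℓ²(ℕᵈ, ℂ)`. -/
def ed {d : ℕ} (k : Fin d → ℕ) : Ell2d d := lp.single 2 k 1

open scoped ComplexInnerProductSpace

section ConjugationLemmas

variable {E : Type*} [NormedAddCommGroup E] [InnerProductSpace ℂ E] {C : E → E}

lemma IsConjugation.add (hC : IsConjugation C) (x y : E) : C (x + y) = C x + C y := by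
  have := hC.1 1 x y; simpa using this

lemma IsConjugation.zero (hC : IsConjugation C) : C 0 = 0 := by
  have h := hC.1 1 0 0
  simp only [one_smul, add_zero, map_one] at h
  exact (left_eq_add.mp h)

lemma IsConjugation.smul (hC : IsConjugation C) (a : ℂ) (x : E) : C (a • x) = conj a • C x := by
  have := hC.1 a x 0; simpa [hC.zero] using this

lemma IsConjugation.sub (hC : IsConjugation C) (x y : E) : C (x - y) = C x - C y := by
  have h := hC.1 (-1) y x
  simp only [neg_smul, one_smul, map_neg, map_one] at h
  rw [sub_eq_add_neg, sub_eq_add_neg, add_comm, add_comm (C x), ← neg_one_smul ℂ y,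
    ← h, neg_one_smul]

lemma IsConjugation.inner_conj (hC : IsConjugation C) (x y : E) :
    ⟪C x, C y⟫ = ⟪y, x⟫ := by
  have key : ⟪C x, C y⟫ = conj ⟪x, y⟫ := by
    have h1 : ‖C x + C y‖ = ‖x + y‖ := by rw [← hC.add]; exact hC.2.2 _
    have h2 : ‖C x - C y‖ = ‖x - y‖ := by rw [← hC.sub]; exact hC.2.2 _
    have h3 : C x - Complex.I • C y = C (x + Complex.I • y) := by
      rw [hC.add, hC.smul]; simp [Complex.conj_I, sub_eq_add_neg]
    have h4 : C x + Complex.I • C y = C (x - Complex.I • y) := by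
      rw [hC.sub, hC.smul]; simp [Complex.conj_I, sub_eq_add_neg]
    rw [inner_eq_sum_norm_sq_div_four (𝕜 := ℂ), inner_eq_sum_norm_sq_div_four (𝕜 := ℂ),
      RCLike.I_to_complex, h1, h2, h3, h4, hC.2.2, hC.2.2]
    simp only [map_div₀, map_add, map_sub, map_mul, map_pow, Complex.conj_ofReal,
      RCLike.conj_ofReal, Complex.conj_I, map_ofNat]
    ring
  rw [key, inner_conj_symm]

end ConjugationLemmas

lemma ed_coord {d : ℕ} (f : Ell2d d) (k : Fin d → ℕ) : ⟪ed k, f⟫ = f k := by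
  rw [ed, lp.inner_single_left]
  simp [RCLike.inner_apply]

lemma ed_ext {d : ℕ} (f g : Ell2d d) (h : ∀ k, ⟪ed k, f⟫ = ⟪ed k, g⟫) : f = g := by
  apply lp.ext
  funext k
  rw [← ed_coord f k, ← ed_coord g k]
  exact h k

/-- Let `d ≥ 2`, `T` a Toeplitz operator on `ℓ²(ℕᵈ, ℂ)` with symbol
coefficients `φ(k)`, and `C` a conjugation with canonical factorization `C = U ∘ J`.  Then the
following are equivalent: (1) `T` is `C`-symmetric; (2) `⟨T e_l, e_k⟩ = ⟨T (C e_k), C e_l⟩`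
for all `k, l ∈ ℕᵈ`; (3) `φ(k − l) = ⟨U* T U e_k, e_l⟩` for all `k, l ∈ ℕᵈ`. -/
theorem c_symmetric_toeplitz_polydisc_characterizations
    (d : ℕ) (hd : 2 ≤ d)
    (S : Fin d → (Ell2d d →L[ℂ] Ell2d d))
    (hS : ∀ (i : Fin d) (k : Fin d → ℕ), S i (ed k) = ed (k + Pi.single i 1))
    (T : Ell2d d →L[ℂ] Ell2d d)
    (hT : ∀ i, (adjoint (S i)).comp (T.comp (S i)) = T)
    (φ : (Fin d → ℤ) → ℂ)
    (hφ : ∀ k l : Fin d → ℕ, φ (fun j => (k j : ℤ) - (l j : ℤ)) = ip (T (ed l)) (ed k))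
    (C : Ell2d d → Ell2d d) (hC : IsConjugation C)
    (J : Ell2d d → Ell2d d) (hJ : IsConjugation J) (hJe : ∀ k, J (ed k) = ed k)
    (U : Ell2d d ≃ₗᵢ[ℂ] Ell2d d) (hU : ∀ x, C x = U (J x)) :
    ((∀ x, C (adjoint T (C x)) = T x) ↔
        ∀ k l : Fin d → ℕ, ip (T (ed l)) (ed k) = ip (T (C (ed k))) (C (ed l))) ∧
    ((∀ x, C (adjoint T (C x)) = T x) ↔
        ∀ k l : Fin d → ℕ,
          φ (fun j => (k j : ℤ) - (l j : ℤ)) = ip (U.symm (T (U (ed k)))) (ed l)) := by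
  -- C agrees with U on the basis
  have hCU : ∀ k : Fin d → ℕ, C (ed k) = U (ed k) := fun k => by rw [hU, hJe]
  -- the matrix entries in (2) and (3) coincide
  have key : ∀ k l : Fin d → ℕ,
      ip (T (C (ed k))) (C (ed l)) = ip (U.symm (T (U (ed k)))) (ed l) := by
    intro k l
    rw [hCU, hCU]
    unfold ip
    rw [← U.inner_map_map (ed l) (U.symm (T (U (ed k)))), U.apply_symm_apply]
  -- (1) ↔ (2)
  have main : (∀ x, C (adjoint T (C x)) = T x) ↔
      ∀ k l : Fin d → ℕ, ip (T (ed l)) (ed k) = ip (T (C (ed k))) (C (ed l)) := by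
    constructor
    · intro h1 k l
      unfold ip
      rw [← h1 (ed l)]
      calc ⟪ed k, C (adjoint T (C (ed l)))⟫
          = ⟪C (C (ed k)), C (adjoint T (C (ed l)))⟫ := by rw [hC.2.1]
        _ = ⟪adjoint T (C (ed l)), C (ed k)⟫ := hC.inner_conj _ _
        _ = ⟪C (ed l), T (C (ed k))⟫ := adjoint_inner_left T _ _
    · intro h2
      -- matrix form of C-symmetry on basis vectors
      have hstar : ∀ k : Fin d → ℕ, adjoint T (ed k) = C (T (C (ed k))) := by
        intro k
        apply ed_ext
        intro l
        have hconj := congrArg conj (h2 k l)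
        unfold ip at hconj
        rw [inner_conj_symm (𝕜 := ℂ), inner_conj_symm (𝕜 := ℂ)] at hconj
        calc ⟪ed l, adjoint T (ed k)⟫ = ⟪T (ed l), ed k⟫ := adjoint_inner_right T _ _
          _ = ⟪T (C (ed k)), C (ed l)⟫ := hconj
          _ = ⟪C (C (T (C (ed k)))), C (ed l)⟫ := by rw [hC.2.1]
          _ = ⟪ed l, C (T (C (ed k)))⟫ := hC.inner_conj _ _
      intro x
      apply ed_ext
      intro l
      have hTl : T (C (ed l)) = C (adjoint T (ed l)) := by rw [hstar l, hC.2.1]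
      calc ⟪ed l, C (adjoint T (C x))⟫
          = ⟪C (C (ed l)), C (adjoint T (C x))⟫ := by rw [hC.2.1]
        _ = ⟪adjoint T (C x), C (ed l)⟫ := hC.inner_conj _ _
        _ = ⟪C x, T (C (ed l))⟫ := adjoint_inner_left T _ _
        _ = ⟪C x, C (adjoint T (ed l))⟫ := by rw [hTl]
        _ = ⟪adjoint T (ed l), x⟫ := hC.inner_conj _ _
        _ = ⟪ed l, T x⟫ := adjoint_inner_left T _ _
  refine ⟨main, main.trans ?_⟩
  constructor
  · intro h k l
    rw [hφ, h k l, key]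
  · intro h k l
    rw [key k l, ← hφ]
    exact h k l
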